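/- arXiv:0705.3443 — 7 statements merged into one kernel-verified Lean document; each statement's English description precedes it below -/
import Mathlib

section
/- For every x > 0 and μ > 0, the improper integral ∫_0^∞ cos(ξx)/(ξ+μ) dξ exists as the limit lim_{R→∞} ∫_0^R cos(ξx)/(ξ+μ) dξ, and equals ∫_0^∞ τ e^{−xτ}/(μ²+τ²) dτ. -/
open MeasureTheory Filter Set

lemma exp_int {c : ℝ} (hc : 0 < c) : ∫ s in Ioi (0:ℝ), Real.exp (-(c*s)) = 1/c := by
  have := integral_comp_mul_left_Ioi (fun u => Real.exp (-u)) 0 hc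
  simp only [mul_zero, integral_exp_neg_Ioi, neg_zero, Real.exp_zero, smul_eq_mul, mul_one] at this
  rw [this, one_div]

lemma ftc_cos (x s R : ℝ) (hx : x ≠ 0) :
    ∫ ξ in (0:ℝ)..R, Real.cos (ξ*x) * Real.exp (-(ξ*s))
      = (s + Real.exp (-(R*s)) * (x*Real.sin (R*x) - s*Real.cos (R*x))) / (s^2+x^2) := by
  have hsx : s^2 + x^2 ≠ 0 := by positivity
  have key : ∀ ξ : ℝ, HasDerivAt (fun ξ => Real.exp (-(ξ*s)) * (x*Real.sin (ξ*x) - s*Real.cos (ξ*x)) / (s^2+x^2))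
      (Real.cos (ξ*x) * Real.exp (-(ξ*s))) ξ := by
    intro ξ
    have h1 : HasDerivAt (fun ξ : ℝ => Real.exp (-(ξ*s))) (-s * Real.exp (-(ξ*s))) ξ := by
      have := ((hasDerivAt_id ξ).mul_const s).neg.exp
      simpa [mul_comm] using this
    have h2 : HasDerivAt (fun ξ : ℝ => x*Real.sin (ξ*x) - s*Real.cos (ξ*x))
        (x*(x*Real.cos (ξ*x)) - s*(-(x*Real.sin (ξ*x)))) ξ := by
      have hs : HasDerivAt (fun ξ : ℝ => Real.sin (ξ*x)) (Real.cos (ξ*x) * x) ξ :=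
        by simpa [Function.comp_def] using (Real.hasDerivAt_sin (ξ*x)).comp ξ ((hasDerivAt_id ξ).mul_const x)
      have hc2 : HasDerivAt (fun ξ : ℝ => Real.cos (ξ*x)) (-Real.sin (ξ*x) * x) ξ :=
        by simpa [Function.comp_def] using (Real.hasDerivAt_cos (ξ*x)).comp ξ ((hasDerivAt_id ξ).mul_const x)
      have := ((hs.const_mul x).sub (hc2.const_mul s))
      exact this.congr_deriv (by ring)
    have := (h1.mul h2).div_const (s^2+x^2)
    refine this.congr_deriv ?_
    field_simp
    ring
  rw [intervalIntegral.integral_eq_sub_of_hasDerivAt (fun ξ _ => key ξ)]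
  · field_simp
    simp only [neg_zero, mul_zero, zero_mul, Real.exp_zero, Real.cos_zero, Real.sin_zero]
    ring
  · apply Continuous.intervalIntegrable
    continuity

lemma fubini_step (x μ R : ℝ) (hx : 0 < x) (hμ : 0 < μ) (hR : 0 ≤ R) :
    ∫ ξ in (0:ℝ)..R, Real.cos (ξ * x) / (ξ + μ)
      = ∫ s in Ioi (0:ℝ), Real.exp (-(μ*s)) *
          ((s + Real.exp (-(R*s)) * (x*Real.sin (R*x) - s*Real.cos (R*x))) / (s^2+x^2)) := by
  have ftc : ∀ s : ℝ, ∫ ξ in (0:ℝ)..R, Real.cos (ξ*x) * Real.exp (-(ξ*s))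
      = (s + Real.exp (-(R*s)) * (x*Real.sin (R*x) - s*Real.cos (R*x))) / (s^2+x^2) :=
    fun s => ftc_cos x s R hx.ne'
  have hcont : Continuous (fun p : ℝ × ℝ => Real.cos (p.1*x) * Real.exp (-((p.1+μ)*p.2))) := by
    continuity
  have hint : Integrable (fun p : ℝ × ℝ => Real.cos (p.1*x) * Real.exp (-((p.1+μ)*p.2)))
      ((volume.restrict (Ioc 0 R)).prod (volume.restrict (Ioi 0))) := by
    rw [integrable_prod_iff hcont.aestronglyMeasurable]
    constructor
    · filter_upwards [ae_restrict_mem measurableSet_Ioc] with ξ hξ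
      have hc : 0 < ξ + μ := by linarith [hξ.1]
      exact ((exp_neg_integrableOn_Ioi 0 hc).const_mul (Real.cos (ξ*x))).congr
        (Eventually.of_forall fun y => by dsimp only; ring_nf)
    · apply Integrable.mono' (g := fun _ : ℝ => (1:ℝ)/μ)
      · exact integrable_const _
      · apply AEStronglyMeasurable.integral_prod_right'
          (f := fun p : ℝ × ℝ => ‖Real.cos (p.1*x) * Real.exp (-((p.1+μ)*p.2))‖)
        exact hcont.norm.aestronglyMeasurable
      · filter_upwards [ae_restrict_mem measurableSet_Ioc] with ξ hξ
        have hc : 0 < ξ + μ := by linarith [hξ.1]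
        have hval : ∫ s in Ioi (0:ℝ), ‖Real.cos (ξ*x) * Real.exp (-((ξ+μ)*s))‖
            = |Real.cos (ξ*x)| * (1/(ξ+μ)) := by
          rw [← exp_int hc, ← MeasureTheory.integral_const_mul]
          congr 1; ext s
          rw [norm_mul, Real.norm_eq_abs, Real.norm_eq_abs, abs_of_pos (Real.exp_pos _)]
        rw [Real.norm_eq_abs, abs_of_nonneg (by positivity : (0:ℝ) ≤ _), hval]
        have h1 : |Real.cos (ξ*x)| ≤ 1 := Real.abs_cos_le_one _
        have h2 : (1:ℝ)/(ξ+μ) ≤ 1/μ := by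
          apply one_div_le_one_div_of_le hμ; linarith [hξ.1]
        calc |Real.cos (ξ*x)| * (1/(ξ+μ)) ≤ 1 * (1/(ξ+μ)) := by
              apply mul_le_mul_of_nonneg_right h1; positivity
          _ ≤ 1/μ := by rw [one_mul]; exact h2
  rw [intervalIntegral.integral_of_le hR]
  calc ∫ ξ in Ioc (0:ℝ) R, Real.cos (ξ * x) / (ξ + μ)
      = ∫ ξ in Ioc (0:ℝ) R, ∫ s in Ioi (0:ℝ), Real.cos (ξ*x) * Real.exp (-((ξ+μ)*s)) := by
        apply setIntegral_congr_fun measurableSet_Ioc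
        intro ξ hξ
        dsimp only
        have hc : 0 < ξ + μ := by linarith [hξ.1]
        rw [MeasureTheory.integral_const_mul, exp_int hc, div_eq_mul_one_div]
    _ = ∫ s in Ioi (0:ℝ), ∫ ξ in Ioc (0:ℝ) R, Real.cos (ξ*x) * Real.exp (-((ξ+μ)*s)) :=
        integral_integral_swap hint
    _ = _ := by
        apply setIntegral_congr_fun measurableSet_Ioi
        intro s _
        dsimp only
        rw [← ftc s, intervalIntegral.integral_of_le hR, ← MeasureTheory.integral_const_mul]
        apply setIntegral_congr_fun measurableSet_Ioc
        intro ξ _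
        dsimp only
        rw [show -((ξ+μ)*s) = -(ξ*s) + -(μ*s) by ring, Real.exp_add]
        ring

lemma subst_lemma (a b : ℝ) (ha : 0 < a) (hb : 0 < b) :
    ∫ τ in Ioi (0:ℝ), τ * Real.exp (-a*τ)/(b^2+τ^2)
      = ∫ u in Ioi (0:ℝ), u * Real.exp (-(a*b)*u)/(1+u^2) := by
  have h := integral_comp_mul_left_Ioi (fun τ => τ * Real.exp (-a*τ)/(b^2+τ^2)) 0 hb
  simp only [mul_zero, smul_eq_mul] at h
  have h2 : ∫ u in Ioi (0:ℝ), (b*u) * Real.exp (-a*(b*u))/(b^2+(b*u)^2)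
      = ∫ u in Ioi (0:ℝ), b⁻¹ * (u * Real.exp (-(a*b)*u)/(1+u^2)) := by
    apply setIntegral_congr_fun measurableSet_Ioi
    intro u _
    dsimp only
    rw [show -a*(b*u) = -(a*b)*u by ring]
    field_simp
  rw [h2, MeasureTheory.integral_const_mul] at h
  exact (mul_left_cancel₀ (inv_ne_zero hb.ne') h).symm

lemma dct_lemma (x μ : ℝ) (hx : 0 < x) (hμ : 0 < μ) :
    Tendsto (fun R : ℝ => ∫ s in Ioi (0:ℝ), Real.exp (-(μ*s)) *
        ((s + Real.exp (-(R*s)) * (x*Real.sin (R*x) - s*Real.cos (R*x))) / (s^2+x^2))) atTop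
      (nhds (∫ s in Ioi (0:ℝ), Real.exp (-(μ*s)) * (s / (s^2+x^2)))) := by
  apply tendsto_integral_filter_of_dominated_convergence
    (bound := fun s => (2/x) * Real.exp (-(μ*s)))
  · filter_upwards with R
    apply Continuous.aestronglyMeasurable
    apply Continuous.mul (by continuity)
    exact Continuous.div (by continuity) (by continuity) (fun s => by positivity)
  · filter_upwards [eventually_ge_atTop (0:ℝ)] with R hR
    filter_upwards [ae_restrict_mem measurableSet_Ioi] with s hs
    have hs0 : 0 < s := hs
    have he : Real.exp (-(R*s)) ≤ 1 := Real.exp_le_one_iff.mpr (by nlinarith)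
    have he0 : 0 < Real.exp (-(R*s)) := Real.exp_pos _
    have hb1 : |x*Real.sin (R*x) - s*Real.cos (R*x)| ≤ x + s := by
      calc |x*Real.sin (R*x) - s*Real.cos (R*x)|
          ≤ |x*Real.sin (R*x)| + |s*Real.cos (R*x)| := abs_sub _ _
        _ ≤ x * 1 + s * 1 := by
            rw [abs_mul, abs_mul, abs_of_pos hx, abs_of_pos hs0]
            gcongr
            exacts [Real.abs_sin_le_one _, Real.abs_cos_le_one _]
        _ = x + s := by ring
    have hnum : |s + Real.exp (-(R*s)) * (x*Real.sin (R*x) - s*Real.cos (R*x))| ≤ 2*s + x := by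
      calc |s + Real.exp (-(R*s)) * (x*Real.sin (R*x) - s*Real.cos (R*x))|
          ≤ |s| + |Real.exp (-(R*s)) * (x*Real.sin (R*x) - s*Real.cos (R*x))| := abs_add_le _ _
        _ ≤ s + 1 * (x + s) := by
            rw [abs_of_pos hs0, abs_mul, abs_of_pos he0]
            gcongr
        _ = 2*s + x := by ring
    have hden : (2*s + x) / (s^2+x^2) ≤ 2/x := by
      rw [div_le_div_iff₀ (by positivity) hx]
      nlinarith [sq_nonneg (s - x), sq_nonneg s]
    rw [norm_mul, Real.norm_eq_abs, Real.norm_eq_abs, abs_of_pos (Real.exp_pos _),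
      abs_div, abs_of_pos (by positivity : (0:ℝ) < s^2+x^2)]
    calc Real.exp (-(μ*s)) * (|s + Real.exp (-(R*s)) * (x*Real.sin (R*x) - s*Real.cos (R*x))| / (s^2+x^2))
        ≤ Real.exp (-(μ*s)) * ((2*s+x) / (s^2+x^2)) := by gcongr
      _ ≤ Real.exp (-(μ*s)) * (2/x) := by gcongr
      _ = (2/x) * Real.exp (-(μ*s)) := by ring
  · exact ((exp_neg_integrableOn_Ioi 0 hμ).const_mul (2/x)).congr
      (Eventually.of_forall fun y => by dsimp only; ring_nf)
  · filter_upwards [ae_restrict_mem measurableSet_Ioi] with s hs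
    have hs0 : (0:ℝ) < s := hs
    have hg : Tendsto (fun R : ℝ => Real.exp (-(R*s)) * (x*Real.sin (R*x) - s*Real.cos (R*x)))
        atTop (nhds 0) := by
      apply squeeze_zero_norm (a := fun R : ℝ => (x + s) * Real.exp (-(s*R)))
      · intro R
        rw [norm_mul, Real.norm_eq_abs, Real.norm_eq_abs, abs_of_pos (Real.exp_pos _),
          mul_comm R s]
        have hb1 : |x*Real.sin (R*x) - s*Real.cos (R*x)| ≤ x + s := by
          calc |x*Real.sin (R*x) - s*Real.cos (R*x)|
              ≤ |x*Real.sin (R*x)| + |s*Real.cos (R*x)| := abs_sub _ _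
            _ ≤ x * 1 + s * 1 := by
                rw [abs_mul, abs_mul, abs_of_pos hx, abs_of_pos hs0]
                gcongr
                exacts [Real.abs_sin_le_one _, Real.abs_cos_le_one _]
            _ = x + s := by ring
        calc Real.exp (-(s*R)) * |x*Real.sin (R*x) - s*Real.cos (R*x)|
            ≤ Real.exp (-(s*R)) * (x+s) := by gcongr
          _ = (x+s) * Real.exp (-(s*R)) := by ring
      · have h1 : Tendsto (fun R : ℝ => s*R) atTop atTop := tendsto_id.const_mul_atTop hs0
        have h2 : Tendsto (fun R : ℝ => Real.exp (-(s*R))) atTop (nhds 0) :=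
          Real.tendsto_exp_atBot.comp (tendsto_neg_atTop_atBot.comp h1)
        simpa using h2.const_mul (x+s)
    have h3 : Tendsto (fun R : ℝ => s + Real.exp (-(R*s)) * (x*Real.sin (R*x) - s*Real.cos (R*x)))
        atTop (nhds (s + 0)) := tendsto_const_nhds.add hg
    have := (h3.div_const (s^2+x^2)).const_mul (Real.exp (-(μ*s)))
    simpa using this

/-- For every `x > 0` and `μ > 0`, the improper integral
`∫_0^∞ cos(ξx)/(ξ+μ) dξ` exists as the limit of `∫_0^R` as `R → ∞`,
and equals the (absolutely convergent) integral `∫_0^∞ τ e^{−xτ}/(μ²+τ²) dτ`. -/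
theorem cos_integral_tendsto (x μ : ℝ) (hx : 0 < x) (hμ : 0 < μ) :
    Tendsto (fun R : ℝ => ∫ ξ in (0:ℝ)..R, Real.cos (ξ * x) / (ξ + μ)) atTop
      (nhds (∫ τ in Ioi (0:ℝ), τ * Real.exp (-x * τ) / (μ ^ 2 + τ ^ 2))) := by
  have hlim := dct_lemma x μ hx hμ
  have hA : (∫ s in Ioi (0:ℝ), Real.exp (-(μ*s)) * (s / (s^2+x^2)))
      = ∫ τ in Ioi (0:ℝ), τ * Real.exp (-x * τ) / (μ ^ 2 + τ ^ 2) := by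
    have e1 : (∫ s in Ioi (0:ℝ), Real.exp (-(μ*s)) * (s / (s^2+x^2)))
        = ∫ s in Ioi (0:ℝ), s * Real.exp (-μ*s)/(x^2+s^2) := by
      apply setIntegral_congr_fun measurableSet_Ioi
      intro s _
      dsimp only
      rw [show -(μ*s) = -μ*s by ring]
      ring
    rw [e1, subst_lemma μ x hμ hx, show μ*x = x*μ by ring, ← subst_lemma x μ hx hμ]
  rw [← hA]
  refine Tendsto.congr' ?_ hlim
  filter_upwards [eventually_ge_atTop (0:ℝ)] with R hR
  exact (fubini_step x μ R hx hμ hR).symm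
end

section
/- For every x > 0 and μ > 0, ∫_0^∞ τ e^{−xτ}/(μ²+τ²) dτ = ∫_0^∞ s e^{−μs}/(s²+x²) ds. -/
open MeasureTheory Set Filter Topology

lemma integrableOn_cexp_neg (c : ℂ) (hc : c.re < 0) :
    IntegrableOn (fun t : ℝ => Complex.exp (c * t)) (Ioi 0) := by
  apply Integrable.mono' ((exp_neg_integrableOn_Ioi 0 (by linarith : (0:ℝ) < -c.re)))
  · exact (Complex.measurable_exp.comp (measurable_const.mul Complex.measurable_ofReal)).aestronglyMeasurable
  · filter_upwards with t
    rw [Complex.norm_exp]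
    simp [Complex.mul_re, neg_mul]

lemma integral_cexp_Ioi (c : ℂ) (hc : c.re < 0) :
    ∫ t : ℝ in Ioi 0, Complex.exp (c * t) = -c⁻¹ := by
  have hc0 : c ≠ 0 := fun h => by simp [h] at hc
  have h1 : Tendsto (fun T : ℝ => ∫ t in (0:ℝ)..T, Complex.exp (c * t)) atTop
      (𝓝 (∫ t : ℝ in Ioi 0, Complex.exp (c * t))) :=
    intervalIntegral_tendsto_integral_Ioi 0 (integrableOn_cexp_neg c hc) tendsto_id
  have h2 : Tendsto (fun T : ℝ => ∫ t in (0:ℝ)..T, Complex.exp (c * t)) atTop (𝓝 (-c⁻¹)) := by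
    have : ∀ T : ℝ, (∫ t in (0:ℝ)..T, Complex.exp (c * t))
        = (Complex.exp (c * T) - 1) / c := by
      intro T; rw [integral_exp_mul_complex hc0]; simp
    simp only [this]
    have hexp : Tendsto (fun T : ℝ => Complex.exp (c * T)) atTop (𝓝 0) := by
      rw [tendsto_zero_iff_norm_tendsto_zero]
      have : ∀ T : ℝ, ‖Complex.exp (c * T)‖ = Real.exp (c.re * T) := by
        intro T; rw [Complex.norm_exp]; simp [Complex.mul_re]
      simp only [this]
      exact Real.tendsto_exp_atBot.comp
        ((Filter.tendsto_const_mul_atBot_of_neg hc).mpr tendsto_id)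
    have h := ((hexp.sub (tendsto_const_nhds (x := (1:ℂ)))).div_const c)
    have : (0 - 1) / c = -c⁻¹ := by field_simp; norm_num
    rwa [this] at h
  exact tendsto_nhds_unique h1 h2

lemma integral_exp_sin (a b : ℝ) (ha : 0 < a) :
    ∫ t in Ioi (0:ℝ), Real.exp (-a * t) * Real.sin (b * t) = b / (a ^ 2 + b ^ 2) := by
  set c : ℂ := -(a + b * Complex.I) with hc
  have hcre : c.re < 0 := by simp [hc]; linarith
  have key : ∀ t : ℝ, Real.exp (-a * t) * Real.sin (b * t) = -(Complex.exp (c * t)).im := by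
    intro t
    rw [Complex.exp_im]
    have h1 : (c * t).re = -a * t := by simp [hc, Complex.mul_re]
    have h2 : (c * t).im = -(b * t) := by simp [hc, Complex.mul_im]
    rw [h1, h2, Real.sin_neg]; ring
  calc ∫ t in Ioi (0:ℝ), Real.exp (-a * t) * Real.sin (b * t)
      = ∫ t in Ioi (0:ℝ), -(Complex.exp (c * t)).im := by simp_rw [key]
    _ = -∫ t in Ioi (0:ℝ), (Complex.exp (c * t)).im := integral_neg _
    _ = -(∫ t in Ioi (0:ℝ), Complex.exp (c * t)).im :=
        congrArg Neg.neg (integral_im (integrableOn_cexp_neg c hcre))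
    _ = (c⁻¹).im := by rw [integral_cexp_Ioi c hcre]; simp
    _ = b / (a ^ 2 + b ^ 2) := by
        have him : c.im = -b := by simp [hc]
        have hns : Complex.normSq c = a ^ 2 + b ^ 2 := by
          simp [hc, Complex.normSq_apply]; ring
        rw [Complex.inv_im, him, hns, neg_neg]

/-- For every `x > 0` and `μ > 0`,
`∫_0^∞ τ e^{−xτ}/(μ²+τ²) dτ = ∫_0^∞ s e^{−μs}/(s²+x²) ds`. -/
theorem kernel_symmetry (x μ : ℝ) (hx : 0 < x) (hμ : 0 < μ) :
    ∫ τ in Ioi (0:ℝ), τ * Real.exp (-x * τ) / (μ ^ 2 + τ ^ 2)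
      = ∫ s in Ioi (0:ℝ), s * Real.exp (-μ * s) / (s ^ 2 + x ^ 2) := by
  have hμτ : ∀ τ : ℝ, (0:ℝ) < μ ^ 2 + τ ^ 2 := fun τ => by positivity
  have hxs : ∀ s : ℝ, (0:ℝ) < s ^ 2 + x ^ 2 := fun s => by positivity
  have step1 : ∀ τ : ℝ, τ * Real.exp (-x * τ) / (μ ^ 2 + τ ^ 2)
      = ∫ s in Ioi (0:ℝ), Real.exp (-x * τ) * (Real.exp (-μ * s) * Real.sin (τ * s)) := by
    intro τ
    rw [integral_const_mul, integral_exp_sin μ τ hμ]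
    field_simp
  have step2 : ∀ s : ℝ, (∫ τ in Ioi (0:ℝ), Real.exp (-x * τ) * (Real.exp (-μ * s) * Real.sin (τ * s)))
      = s * Real.exp (-μ * s) / (s ^ 2 + x ^ 2) := by
    intro s
    have : ∀ τ : ℝ, Real.exp (-x * τ) * (Real.exp (-μ * s) * Real.sin (τ * s))
        = Real.exp (-μ * s) * (Real.exp (-x * τ) * Real.sin (s * τ)) := by
      intro τ; rw [mul_comm τ s]; ring
    simp_rw [this]
    rw [integral_const_mul, integral_exp_sin x s hx]
    field_simp
    ring
  have hF : Integrable (Function.uncurry fun τ s : ℝ =>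
      Real.exp (-x * τ) * (Real.exp (-μ * s) * Real.sin (τ * s)))
      ((volume.restrict (Ioi 0)).prod (volume.restrict (Ioi 0))) := by
    apply Integrable.mono'
      ((exp_neg_integrableOn_Ioi 0 hx).mul_prod (exp_neg_integrableOn_Ioi 0 hμ))
    · apply Measurable.aestronglyMeasurable
      exact ((Real.measurable_exp.comp ((measurable_const.mul measurable_fst)))).mul
        ((Real.measurable_exp.comp (measurable_const.mul measurable_snd)).mul
          (Real.measurable_sin.comp (measurable_fst.mul measurable_snd)))
    · filter_upwards with p
      simp only [Function.uncurry, Real.norm_eq_abs, abs_mul, Real.abs_exp]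
      have h1 : |Real.sin (p.1 * p.2)| ≤ 1 := Real.abs_sin_le_one _
      have e1 : (0:ℝ) < Real.exp (-x * p.1) := Real.exp_pos _
      have e2 : (0:ℝ) < Real.exp (-μ * p.2) := Real.exp_pos _
      calc Real.exp (-x * p.1) * (Real.exp (-μ * p.2) * |Real.sin (p.1 * p.2)|)
          ≤ Real.exp (-x * p.1) * (Real.exp (-μ * p.2) * 1) := by gcongr
        _ = Real.exp (-x * p.1) * Real.exp (-μ * p.2) := by ring
  calc ∫ τ in Ioi (0:ℝ), τ * Real.exp (-x * τ) / (μ ^ 2 + τ ^ 2)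
      = ∫ τ in Ioi (0:ℝ), ∫ s in Ioi (0:ℝ),
          Real.exp (-x * τ) * (Real.exp (-μ * s) * Real.sin (τ * s)) := by simp_rw [step1]
    _ = ∫ s in Ioi (0:ℝ), ∫ τ in Ioi (0:ℝ),
          Real.exp (-x * τ) * (Real.exp (-μ * s) * Real.sin (τ * s)) :=
        integral_integral_swap hF
    _ = ∫ s in Ioi (0:ℝ), s * Real.exp (-μ * s) / (s ^ 2 + x ^ 2) := by simp_rw [step2]
end

section
/- For every μ > 0, the function K_μ is integrable on ℝ and ∫_ℝ K_μ(x) dx = √(2π)/μ. -/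
open MeasureTheory Set

/-- The kernel `K_μ(x) = √(2/π) ∫_0^∞ τ e^{−|x|τ}/(μ²+τ²) dτ`. -/
noncomputable def Kmu (μ x : ℝ) : ℝ :=
  Real.sqrt (2 / Real.pi) * ∫ τ in Ioi (0:ℝ), τ * Real.exp (-|x| * τ) / (μ ^ 2 + τ ^ 2)

lemma integrableExpAbs {t : ℝ} (ht : 0 < t) :
    Integrable (fun x : ℝ => Real.exp (-|x| * t)) volume := by
  have hIoi : IntegrableOn (fun x : ℝ => Real.exp (-|x| * t)) (Ioi 0) := by
    refine (exp_neg_integrableOn_Ioi 0 ht).congr_fun (fun x hx => ?_) measurableSet_Ioi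
    rw [abs_of_pos hx]; ring_nf
  have hIic : IntegrableOn (fun x : ℝ => Real.exp (-|x| * t)) (Iic 0) := by
    rw [← Measure.map_neg_eq_self (volume : Measure ℝ)]
    have m : MeasurableEmbedding fun x : ℝ => -x := (Homeomorph.neg ℝ).measurableEmbedding
    rw [m.integrableOn_map_iff]
    simp_rw [Function.comp_def, abs_neg, neg_preimage, neg_Iic, neg_zero]
    exact Iff.mpr integrableOn_Ici_iff_integrableOn_Ioi hIoi
  have h := hIic.union hIoi
  rwa [Iic_union_Ioi, integrableOn_univ] at h

lemma integralExpAbs {t : ℝ} (ht : 0 < t) :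
    ∫ x : ℝ, Real.exp (-|x| * t) = 2 / t := by
  have h := integral_comp_abs (f := fun y : ℝ => Real.exp (-y * t))
  rw [h]
  have h2 := integral_comp_mul_right_Ioi (fun y : ℝ => Real.exp (-y)) 0 ht
  simp only [zero_mul, smul_eq_mul, integral_exp_neg_Ioi, neg_zero, Real.exp_zero,
    mul_one] at h2
  simp_rw [neg_mul] at h2 ⊢
  rw [h2]
  ring

lemma integrableInvSq (μ : ℝ) (hμ : 0 < μ) :
    Integrable (fun t : ℝ => (μ ^ 2 + t ^ 2)⁻¹) volume := by
  have h1 : Integrable (fun t : ℝ => (1 + (μ⁻¹ * t) ^ 2)⁻¹) volume := by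
    exact integrable_inv_one_add_sq.comp_mul_left' (inv_ne_zero hμ.ne')
  have h2 := h1.const_mul ((μ ^ 2)⁻¹)
  refine h2.congr (Filter.Eventually.of_forall fun t => ?_)
  field_simp

lemma integralInvSq (μ : ℝ) (hμ : 0 < μ) :
    ∫ t in Ioi (0:ℝ), (μ ^ 2 + t ^ 2)⁻¹ = Real.pi / (2 * μ) := by
  have h := integral_comp_mul_left_Ioi (fun t : ℝ => (μ ^ 2 + t ^ 2)⁻¹) 0 hμ
  rw [mul_zero] at h
  have h2 : ∫ s in Ioi (0:ℝ), (μ ^ 2 + (μ * s) ^ 2)⁻¹ = (μ ^ 2)⁻¹ * (Real.pi / 2) := by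
    have he : ∀ s : ℝ, (μ ^ 2 + (μ * s) ^ 2)⁻¹ = (μ ^ 2)⁻¹ * (1 + s ^ 2)⁻¹ := fun s => by
      rw [← mul_inv]; congr 1; ring
    simp_rw [he]
    rw [integral_const_mul, integral_Ioi_inv_one_add_sq, Real.arctan_zero, sub_zero]
  rw [smul_eq_mul] at h
  beta_reduce at h
  rw [h2] at h
  have h3 : (∫ t in Ioi (0:ℝ), (μ ^ 2 + t ^ 2)⁻¹) = μ * ((μ ^ 2)⁻¹ * (Real.pi / 2)) := by
    rw [h, ← mul_assoc, mul_inv_cancel₀ hμ.ne', one_mul]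
  rw [h3]
  field_simp

/-- For every `μ > 0`, `K_μ` is integrable on `ℝ` and `∫_ℝ K_μ(x) dx = √(2π)/μ`. -/
theorem Kmu_integral_eq (μ : ℝ) (hμ : 0 < μ) :
    Integrable (Kmu μ) volume ∧ ∫ x : ℝ, Kmu μ x = Real.sqrt (2 * Real.pi) / μ := by
  set ν : Measure ℝ := volume.restrict (Ioi (0:ℝ)) with hν
  set f : ℝ × ℝ → ℝ := fun p => p.2 * Real.exp (-|p.1| * p.2) / (μ ^ 2 + p.2 ^ 2) with hfdef
  have hd : ∀ t : ℝ, (0:ℝ) < μ ^ 2 + t ^ 2 := fun t => by positivity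
  have hcont : Continuous f := by
    apply Continuous.div
    · exact continuous_snd.mul
        (Real.continuous_exp.comp ((continuous_fst.abs.neg).mul continuous_snd))
    · fun_prop
    · exact fun p => (hd p.2).ne'
  have hmeas : AEStronglyMeasurable f (volume.prod ν) := hcont.aestronglyMeasurable
  have key : ∀ t : ℝ, 0 < t →
      Integrable (fun x => f (x, t)) volume ∧ (∫ x, f (x, t)) = 2 * (μ ^ 2 + t ^ 2)⁻¹ := by
    intro t ht
    have hi := integrableExpAbs ht
    have heq : ∀ x : ℝ, f (x, t) = (t / (μ ^ 2 + t ^ 2)) * Real.exp (-|x| * t) := fun x => by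
      simp only [hfdef]; ring
    constructor
    · exact (hi.const_mul (t / (μ ^ 2 + t ^ 2))).congr
        (Filter.Eventually.of_forall fun x => (heq x).symm)
    · calc (∫ x, f (x, t))
          = ∫ x, (t / (μ ^ 2 + t ^ 2)) * Real.exp (-|x| * t) := by simp_rw [heq]
        _ = (t / (μ ^ 2 + t ^ 2)) * (2 / t) := by rw [integral_const_mul, integralExpAbs ht]
        _ = 2 * (μ ^ 2 + t ^ 2)⁻¹ := by
            field_simp
  have hprod : Integrable f (volume.prod ν) := by
    rw [integrable_prod_iff' hmeas]
    refine ⟨?_, ?_⟩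
    · filter_upwards [ae_restrict_mem measurableSet_Ioi] with t ht
      exact (key t ht).1
    · have hcongr : (fun t => ∫ x, ‖f (x, t)‖) =ᵐ[ν] fun t => 2 * (μ ^ 2 + t ^ 2)⁻¹ := by
        filter_upwards [ae_restrict_mem measurableSet_Ioi] with t ht
        have ht' : (0:ℝ) < t := ht
        have hn : ∀ x : ℝ, ‖f (x, t)‖ = f (x, t) := fun x => by
          rw [Real.norm_eq_abs, abs_of_nonneg]
          show (0:ℝ) ≤ t * Real.exp (-|x| * t) / (μ ^ 2 + t ^ 2)
          positivity
        simp_rw [hn]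
        exact (key t ht).2
      exact (((integrableInvSq μ hμ).const_mul 2).restrict).congr hcongr.symm
  have hK : ∀ x, Kmu μ x = Real.sqrt (2 / Real.pi) * ∫ t, f (x, t) ∂ν := fun x => rfl
  have hKint : Integrable (Kmu μ) volume := by
    have h := (hprod.integral_prod_left).const_mul (Real.sqrt (2 / Real.pi))
    exact h.congr (Filter.Eventually.of_forall fun x => (hK x).symm)
  refine ⟨hKint, ?_⟩
  have hswap : (∫ x, ∫ t, f (x, t) ∂ν) = ∫ t, (∫ x, f (x, t)) ∂ν :=
    integral_integral_swap (f := fun x t => f (x, t)) hprod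
  have hinner : (∫ t, (∫ x, f (x, t)) ∂ν) = Real.pi / μ := by
    have h1 : (∫ t in Ioi (0:ℝ), (∫ x, f (x, t)))
        = ∫ t in Ioi (0:ℝ), 2 * (μ ^ 2 + t ^ 2)⁻¹ :=
      setIntegral_congr_fun measurableSet_Ioi fun t ht => (key t ht).2
    rw [hν, h1, integral_const_mul, integralInvSq μ hμ]
    field_simp
  have hsqrt : Real.sqrt (2 / Real.pi) * Real.pi = Real.sqrt (2 * Real.pi) := by
    rw [show (2 * Real.pi) = (2 / Real.pi) * Real.pi ^ 2 by field_simp,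
      Real.sqrt_mul (by positivity), Real.sqrt_sq Real.pi_pos.le]
  calc (∫ x, Kmu μ x)
      = Real.sqrt (2 / Real.pi) * ∫ x, ∫ t, f (x, t) ∂ν := by
        simp_rw [hK]; rw [integral_const_mul]
    _ = Real.sqrt (2 / Real.pi) * (Real.pi / μ) := by rw [hswap, hinner]
    _ = Real.sqrt (2 * Real.pi) / μ := by
        rw [← hsqrt]; ring
end

section
/- For every μ > 0 and every x > 0, the derivative of K_μ satisfies the two-sided bound √(2/π)·e^{−μx}/(2x) ≤ −K_μ′(x) ≤ √(2/π)/x. In particular, 0 < −K_μ′(x) for all x > 0. -/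
open MeasureTheory Set

lemma int_exp (a : ℝ) {b : ℝ} (hb : 0 < b) :
    ∫ τ in Ioi a, Real.exp (-b * τ) = Real.exp (-b * a) / b := by
  have h : ∀ y ∈ Ici a, HasDerivAt (fun t => -Real.exp (-b * t) / b) (Real.exp (-b * y)) y := by
    intro y _
    have : HasDerivAt (fun t : ℝ => -b * t) (-b) y := by
      simpa using (hasDerivAt_id y).const_mul (-b)
    have := (this.exp.neg).div_const b
    refine this.congr_deriv ?_
    field_simp
  have htend : Filter.Tendsto (fun t => -Real.exp (-b * t) / b) Filter.atTop (nhds 0) := by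
    have h1 : Filter.Tendsto (fun t : ℝ => -b * t) Filter.atTop Filter.atBot :=
      Filter.Tendsto.const_mul_atTop_of_neg (neg_neg_iff_pos.2 hb) Filter.tendsto_id
    have := (Real.tendsto_exp_atBot.comp h1).neg.div_const b
    simpa using this
  have := integral_Ioi_of_hasDerivAt_of_tendsto' h
      ((exp_neg_integrableOn_Ioi a hb).congr_fun (fun t _ => by ring_nf) measurableSet_Ioi)
      htend
  rw [this]; field_simp; ring

lemma intOn2 (μ : ℝ) (hμ : 0 < μ) {b : ℝ} (hb : 0 < b) :
    IntegrableOn (fun τ => τ ^ 2 * Real.exp (-b * τ) / (μ ^ 2 + τ ^ 2)) (Ioi 0) := by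
  have hd : ∀ τ : ℝ, 0 < μ ^ 2 + τ ^ 2 := fun τ => by positivity
  refine Integrable.mono (exp_neg_integrableOn_Ioi 0 hb) ?_ ?_
  · exact (Continuous.div (by fun_prop) (by fun_prop) (fun τ => (hd τ).ne')).aestronglyMeasurable
  · filter_upwards [ae_restrict_mem measurableSet_Ioi] with τ hτ
    rw [Real.norm_eq_abs, Real.norm_eq_abs, abs_of_nonneg (by positivity),
      abs_of_nonneg (Real.exp_pos _).le]
    rw [div_le_iff₀ (hd τ)]
    nlinarith [Real.exp_pos (-b * τ), sq_nonneg μ]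

lemma intOn1 (μ : ℝ) (hμ : 0 < μ) {b : ℝ} (hb : 0 < b) :
    IntegrableOn (fun τ => τ * Real.exp (-b * τ) / (μ ^ 2 + τ ^ 2)) (Ioi 0) := by
  have hd : ∀ τ : ℝ, 0 < μ ^ 2 + τ ^ 2 := fun τ => by positivity
  refine Integrable.mono ((exp_neg_integrableOn_Ioi 0 hb).const_mul (1 / (2 * μ))) ?_ ?_
  · exact (Continuous.div (by fun_prop) (by fun_prop) (fun τ => (hd τ).ne')).aestronglyMeasurable
  · filter_upwards [ae_restrict_mem measurableSet_Ioi] with τ hτ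
    have hτ0 : (0:ℝ) < τ := hτ
    rw [Real.norm_eq_abs, Real.norm_eq_abs, abs_of_nonneg (by positivity),
      abs_of_nonneg (by positivity)]
    calc τ * Real.exp (-b * τ) / (μ ^ 2 + τ ^ 2)
        ≤ τ * Real.exp (-b * τ) / (2 * μ * τ) :=
          div_le_div_of_nonneg_left (by positivity) (by positivity)
            (by nlinarith [sq_nonneg (μ - τ)])
      _ = 1 / (2 * μ) * Real.exp (-b * τ) := by
          field_simp

lemma hasDeriv_I (μ : ℝ) (hμ : 0 < μ) {x : ℝ} (hx : 0 < x) :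
    HasDerivAt (fun y => ∫ τ in Ioi (0:ℝ), τ * Real.exp (-y * τ) / (μ ^ 2 + τ ^ 2))
      (-∫ τ in Ioi (0:ℝ), τ ^ 2 * Real.exp (-x * τ) / (μ ^ 2 + τ ^ 2)) x := by
  have hd : ∀ τ : ℝ, 0 < μ ^ 2 + τ ^ 2 := fun τ => by positivity
  set F : ℝ → ℝ → ℝ := fun y τ => τ * Real.exp (-y * τ) / (μ ^ 2 + τ ^ 2)
  set F' : ℝ → ℝ → ℝ := fun y τ => -(τ ^ 2 * Real.exp (-y * τ) / (μ ^ 2 + τ ^ 2))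
  have key := hasDerivAt_integral_of_dominated_loc_of_deriv_le (F := F) (F' := F')
    (x₀ := x) (s := Metric.ball x (x / 2)) (bound := fun τ => Real.exp (-(x/2) * τ))
    (μ := volume.restrict (Ioi 0)) (Metric.ball_mem_nhds x (half_pos hx))
    (Filter.Eventually.of_forall fun y =>
      (Continuous.div (by fun_prop) (by fun_prop) (fun τ => (hd τ).ne')).aestronglyMeasurable)
    (intOn1 μ hμ hx)
    ((Continuous.div (by fun_prop) (by fun_prop) (fun τ => (hd τ).ne')).neg.aestronglyMeasurable)
    ?_ ((exp_neg_integrableOn_Ioi 0 (half_pos hx)))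
    ?_
  · rw [← integral_neg]
    exact key.2
  · filter_upwards [ae_restrict_mem measurableSet_Ioi] with τ hτ y hy
    have hτ0 : (0:ℝ) < τ := hτ
    have hyx : x / 2 < y := by
      have := abs_lt.1 (Metric.mem_ball.1 hy); linarith [this.1]
    have hexp : Real.exp (-y * τ) ≤ Real.exp (-(x/2) * τ) :=
      Real.exp_le_exp.2 (by nlinarith)
    rw [Real.norm_eq_abs, abs_neg, abs_of_nonneg (by positivity)]
    rw [div_le_iff₀ (hd τ)]
    nlinarith [Real.exp_pos (-y * τ), sq_nonneg μ, (Real.exp_pos (-(x/2)*τ)).le]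
  · filter_upwards [ae_restrict_mem measurableSet_Ioi] with τ hτ y hy
    have h1 : HasDerivAt (fun y : ℝ => -y * τ) (-τ) y := by
      simpa [neg_mul] using (hasDerivAt_neg y).mul_const τ
    have := ((h1.exp.const_mul τ).div_const (μ ^ 2 + τ ^ 2))
    refine this.congr_deriv ?_
    simp only [F']; ring

/-- For every `μ > 0` and `x > 0`, the derivative of `K_μ` satisfies
`√(2/π)·e^{−μx}/(2x) ≤ −K_μ′(x) ≤ √(2/π)/x`; in particular `0 < −K_μ′(x)`. -/
theorem Kmu_deriv_bounds (μ : ℝ) (hμ : 0 < μ) (x : ℝ) (hx : 0 < x) :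
    (Real.sqrt (2 / Real.pi) * Real.exp (-μ * x) / (2 * x) ≤ -(deriv (Kmu μ) x) ∧
      -(deriv (Kmu μ) x) ≤ Real.sqrt (2 / Real.pi) / x) ∧
    0 < -(deriv (Kmu μ) x) := by
  have hd : ∀ τ : ℝ, 0 < μ ^ 2 + τ ^ 2 := fun τ => by positivity
  set c := Real.sqrt (2 / Real.pi) with hc
  have hc0 : 0 < c := Real.sqrt_pos.mpr (div_pos two_pos Real.pi_pos)
  set J := ∫ τ in Ioi (0:ℝ), τ ^ 2 * Real.exp (-x * τ) / (μ ^ 2 + τ ^ 2) with hJ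
  have hK : HasDerivAt (Kmu μ) (c * -J) x := by
    refine HasDerivAt.congr_of_eventuallyEq ((hasDeriv_I μ hμ hx).const_mul c) ?_
    filter_upwards [Ioi_mem_nhds hx] with y hy
    simp only [Kmu, abs_of_pos (show (0:ℝ) < y from hy), hc]
  have hderiv : -(deriv (Kmu μ) x) = c * J := by
    rw [hK.deriv]; ring
  have hupper : J ≤ 1 / x := by
    have h1 : J ≤ ∫ τ in Ioi (0:ℝ), Real.exp (-x * τ) := by
      refine setIntegral_mono_on (intOn2 μ hμ hx) (exp_neg_integrableOn_Ioi 0 hx)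
        measurableSet_Ioi fun τ hτ => ?_
      rw [div_le_iff₀ (hd τ)]
      nlinarith [Real.exp_pos (-x * τ), sq_nonneg μ]
    rw [int_exp 0 hx] at h1
    simpa using h1
  have hlower : Real.exp (-x * μ) / (2 * x) ≤ J := by
    have h1 : ∫ τ in Ioi μ, (1/2) * Real.exp (-x * τ) = Real.exp (-x * μ) / (2 * x) := by
      rw [integral_const_mul, int_exp μ hx]
      field_simp
    have h2 : ∫ τ in Ioi μ, (1/2) * Real.exp (-x * τ)
        ≤ ∫ τ in Ioi μ, τ ^ 2 * Real.exp (-x * τ) / (μ ^ 2 + τ ^ 2) := by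
      refine setIntegral_mono_on ((exp_neg_integrableOn_Ioi μ hx).const_mul _)
        ((intOn2 μ hμ hx).mono_set (Ioi_subset_Ioi hμ.le)) measurableSet_Ioi fun τ hτ => ?_
      have hτμ : μ < τ := hτ
      rw [le_div_iff₀ (hd τ)]
      nlinarith [Real.exp_pos (-x * τ), pow_le_pow_left₀ hμ.le hτμ.le 2]
    have h3 : ∫ τ in Ioi μ, τ ^ 2 * Real.exp (-x * τ) / (μ ^ 2 + τ ^ 2) ≤ J := by
      refine setIntegral_mono_set (intOn2 μ hμ hx) ?_
        (HasSubset.Subset.eventuallyLE (Ioi_subset_Ioi hμ.le))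
      filter_upwards [ae_restrict_mem measurableSet_Ioi] with τ hτ
      have : (0:ℝ) < τ := hτ
      positivity
    linarith
  have hL : c * Real.exp (-μ * x) / (2 * x) ≤ -(deriv (Kmu μ) x) := by
    rw [hderiv, mul_div_assoc, show -μ * x = -x * μ by ring]
    exact mul_le_mul_of_nonneg_left hlower hc0.le
  refine ⟨⟨hL, ?_⟩, lt_of_lt_of_le (by positivity) hL⟩
  rw [hderiv, div_eq_mul_one_div c x]
  exact mul_le_mul_of_nonneg_left hupper hc0.le
end

section
/- For every μ > 0, the derivative K_μ′ is not integrable on ℝ; equivalently, ∫_0^1 (∫_0^∞ τ² e^{−xτ}/(μ²+τ²) dτ) dx = +∞. Consequently K_μ′ ∉ L¹(ℝ). -/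
open MeasureTheory Set

namespace KmuAux

lemma cont1 (μ x : ℝ) (hμ : 0 < μ) :
    Continuous (fun τ : ℝ => τ * Real.exp (-x * τ) / (μ ^ 2 + τ ^ 2)) := by
  apply Continuous.div (by fun_prop) (by fun_prop)
  intro τ
  nlinarith [sq_nonneg τ]

lemma cont2 (μ x : ℝ) (hμ : 0 < μ) :
    Continuous (fun τ : ℝ => τ ^ 2 * Real.exp (-x * τ) / (μ ^ 2 + τ ^ 2)) := by
  apply Continuous.div (by fun_prop) (by fun_prop)
  intro τ
  nlinarith [sq_nonneg τ]

lemma int2 {μ : ℝ} (hμ : 0 < μ) {x : ℝ} (hx : 0 < x) :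
    IntegrableOn (fun τ : ℝ => τ ^ 2 * Real.exp (-x * τ) / (μ ^ 2 + τ ^ 2)) (Ioi 0) := by
  refine (exp_neg_integrableOn_Ioi 0 hx).mono'
    ((cont2 μ x hμ).aestronglyMeasurable.restrict) ?_
  filter_upwards [ae_restrict_mem measurableSet_Ioi] with τ hτ
  have hτ0 : (0:ℝ) < τ := hτ
  have h1 : 0 < μ ^ 2 + τ ^ 2 := by nlinarith
  rw [Real.norm_eq_abs, abs_of_nonneg (by positivity), div_le_iff₀ h1]
  nlinarith [Real.exp_pos (-x * τ), sq_nonneg μ]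

lemma int1 {μ : ℝ} (hμ : 0 < μ) {x : ℝ} (hx : 0 < x) :
    IntegrableOn (fun τ : ℝ => τ * Real.exp (-x * τ) / (μ ^ 2 + τ ^ 2)) (Ioi 0) := by
  refine (((exp_neg_integrableOn_Ioi 0 hx).const_mul (1 / (2 * μ))).mono'
    ((cont1 μ x hμ).aestronglyMeasurable.restrict)) ?_
  filter_upwards [ae_restrict_mem measurableSet_Ioi] with τ hτ
  have hτ0 : (0:ℝ) < τ := hτ
  have h1 : 0 < μ ^ 2 + τ ^ 2 := by nlinarith
  rw [Real.norm_eq_abs, abs_of_nonneg (by positivity), div_le_iff₀ h1]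
  have hE := Real.exp_pos (-x * τ)
  rw [show (1:ℝ) / (2 * μ) * Real.exp (-x * τ) * (μ ^ 2 + τ ^ 2) =
      Real.exp (-x * τ) * ((μ ^ 2 + τ ^ 2) / (2 * μ)) from by ring]
  have key : τ ≤ (μ ^ 2 + τ ^ 2) / (2 * μ) := by
    rw [le_div_iff₀ (by positivity)]
    nlinarith [sq_nonneg (μ - τ)]
  nlinarith [mul_le_mul_of_nonneg_left key hE.le]

/-- Differentiation under the integral sign: for `x₀ > 0`,
`K_μ′(x₀) = −√(2/π) ∫_0^∞ τ² e^{−x₀τ}/(μ²+τ²) dτ`. -/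
lemma hasDeriv {μ : ℝ} (hμ : 0 < μ) {x₀ : ℝ} (hx : 0 < x₀) :
    HasDerivAt (Kmu μ)
      (-(Real.sqrt (2 / Real.pi) *
        ∫ τ in Ioi (0:ℝ), τ ^ 2 * Real.exp (-x₀ * τ) / (μ ^ 2 + τ ^ 2))) x₀ := by
  set c := Real.sqrt (2 / Real.pi)
  have key : HasDerivAt (fun x => ∫ τ in Ioi (0:ℝ), τ * Real.exp (-x * τ) / (μ ^ 2 + τ ^ 2))
      (∫ τ in Ioi (0:ℝ), -(τ ^ 2 * Real.exp (-x₀ * τ) / (μ ^ 2 + τ ^ 2))) x₀ := by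
    have hball : ∀ x ∈ Metric.ball x₀ (x₀ / 2), x₀ / 2 < x := by
      intro x hx'
      rw [Metric.mem_ball, Real.dist_eq, abs_lt] at hx'
      linarith [hx'.1]
    refine (hasDerivAt_integral_of_dominated_loc_of_deriv_le (Metric.ball_mem_nhds x₀ (half_pos hx))
      (F := fun x τ => τ * Real.exp (-x * τ) / (μ ^ 2 + τ ^ 2))
      (F' := fun x τ => -(τ ^ 2 * Real.exp (-x * τ) / (μ ^ 2 + τ ^ 2)))
      (bound := fun τ => Real.exp (-(x₀ / 2) * τ))
      ?_ (int1 hμ hx) ?_ ?_ ?_ ?_).2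
    · filter_upwards with x using (cont1 μ x hμ).aestronglyMeasurable.restrict
    · exact ((cont2 μ x₀ hμ).neg.aestronglyMeasurable.restrict)
    · filter_upwards [ae_restrict_mem measurableSet_Ioi] with τ hτ x hx'
      have hτ0 : (0:ℝ) < τ := hτ
      have hxl := hball x hx'
      have h1 : 0 < μ ^ 2 + τ ^ 2 := by nlinarith
      rw [norm_neg, Real.norm_eq_abs, abs_of_nonneg (by positivity), div_le_iff₀ h1]
      have hEE : Real.exp (-x * τ) ≤ Real.exp (-(x₀ / 2) * τ) := by
        apply Real.exp_le_exp.2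
        nlinarith
      nlinarith [Real.exp_pos (-x * τ), Real.exp_pos (-(x₀ / 2) * τ), sq_nonneg μ,
        mul_le_mul_of_nonneg_left hEE (sq_nonneg τ)]
    · exact exp_neg_integrableOn_Ioi 0 (half_pos hx)
    · filter_upwards [ae_restrict_mem measurableSet_Ioi] with τ hτ x hx'
      have h1 : 0 < μ ^ 2 + τ ^ 2 := by
        have hτ0 : (0:ℝ) < τ := hτ
        nlinarith
      have h := (((hasDerivAt_id x).neg.mul_const τ).exp).const_mul (τ / (μ ^ 2 + τ ^ 2))
      have heq : (fun y : ℝ => τ * Real.exp (-y * τ) / (μ ^ 2 + τ ^ 2)) =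
          fun y : ℝ => τ / (μ ^ 2 + τ ^ 2) * Real.exp (-y * τ) := by
        funext y; ring
      rw [heq]
      refine h.congr_deriv ?_
      simp only [Pi.neg_apply, id_eq]
      ring
  have hKeq : Kmu μ =ᶠ[nhds x₀]
      fun x => c * ∫ τ in Ioi (0:ℝ), τ * Real.exp (-x * τ) / (μ ^ 2 + τ ^ 2) := by
    filter_upwards [Ioi_mem_nhds hx] with x hx'
    have : |x| = x := abs_of_pos hx'
    simp only [Kmu, this]
    rfl
  have h2 := (key.const_mul c).congr_of_eventuallyEq hKeq
  rw [integral_neg, mul_neg] at h2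
  exact h2

lemma inv_not_int : ¬ IntegrableOn (fun x : ℝ => x⁻¹) (Ioo (0:ℝ) 1) := by
  intro h
  have h2 : IntegrableOn (fun x : ℝ => x ^ (-1 : ℝ)) (Ioo (0:ℝ) 1) :=
    h.congr_fun (fun x _ => (Real.rpow_neg_one x).symm) measurableSet_Ioo
  rw [intervalIntegral.integrableOn_Ioo_rpow_iff zero_lt_one] at h2
  linarith

/-- The key lower bound: for `0 < x < 1`,
`∫_0^∞ τ² e^{−xτ}/(μ²+τ²) dτ ≥ (e^{−(μ+1)}/2) · x⁻¹`. -/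
lemma lower {μ : ℝ} (hμ : 0 < μ) {x : ℝ} (hx : x ∈ Ioo (0:ℝ) 1) :
    Real.exp (-(μ + 1)) / 2 * x⁻¹ ≤
      ∫ τ in Ioi (0:ℝ), τ ^ 2 * Real.exp (-x * τ) / (μ ^ 2 + τ ^ 2) := by
  obtain ⟨hx0, hx1⟩ := hx
  have hint := int2 hμ (μ := μ) hx0
  have hsub : Ioo μ (μ + x⁻¹) ⊆ Ioi (0:ℝ) := fun τ hτ => lt_trans hμ hτ.1
  have step1 : ∫ τ in Ioo μ (μ + x⁻¹), τ ^ 2 * Real.exp (-x * τ) / (μ ^ 2 + τ ^ 2) ≤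
      ∫ τ in Ioi (0:ℝ), τ ^ 2 * Real.exp (-x * τ) / (μ ^ 2 + τ ^ 2) := by
    refine setIntegral_mono_set hint ?_ (HasSubset.Subset.eventuallyLE hsub)
    filter_upwards [ae_restrict_mem measurableSet_Ioi] with τ hτ
    have hτ0 : (0:ℝ) < τ := hτ
    have h1 : 0 < μ ^ 2 + τ ^ 2 := by nlinarith
    positivity
  have hmeas : volume (Ioo μ (μ + x⁻¹)) = ENNReal.ofReal x⁻¹ := by
    rw [Real.volume_Ioo]; congr 1; ring
  have hxinv : (0:ℝ) < x⁻¹ := by positivity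
  have step2 : Real.exp (-(μ + 1)) / 2 * x⁻¹ ≤
      ∫ τ in Ioo μ (μ + x⁻¹), τ ^ 2 * Real.exp (-x * τ) / (μ ^ 2 + τ ^ 2) := by
    have h := setIntegral_ge_of_const_le_real (μ := volume) (c := Real.exp (-(μ + 1)) / 2)
      (s := Ioo μ (μ + x⁻¹)) (f := fun τ => τ ^ 2 * Real.exp (-x * τ) / (μ ^ 2 + τ ^ 2))
      measurableSet_Ioo (by rw [hmeas]; exact ENNReal.ofReal_ne_top)
      ?_ (hint.mono hsub le_rfl)
    · rwa [measureReal_def, hmeas, ENNReal.toReal_ofReal hxinv.le] at h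
    · intro τ hτ
      obtain ⟨hτ1, hτ2⟩ := hτ
      have hτ0 : 0 < τ := lt_trans hμ hτ1
      have h1 : 0 < μ ^ 2 + τ ^ 2 := by nlinarith
      rw [le_div_iff₀ h1]
      have hxτ : -(μ + 1) ≤ -x * τ := by
        have h3 : x * τ ≤ x * (μ + x⁻¹) := mul_le_mul_of_nonneg_left hτ2.le hx0.le
        have h4 : x * (μ + x⁻¹) = x * μ + 1 := by
          rw [mul_add, mul_inv_cancel₀ hx0.ne']
        have h5 : x * μ ≤ μ := by nlinarith
        linarith
      have hEE := Real.exp_le_exp.2 hxτ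
      have hμτ : μ ^ 2 ≤ τ ^ 2 := by nlinarith
      nlinarith [mul_le_mul_of_nonneg_left hEE (sq_nonneg τ),
        mul_nonneg (Real.exp_pos (-(μ + 1))).le (sub_nonneg.2 hμτ)]
  linarith

lemma lintegral_inv_top : ∫⁻ x in Ioo (0:ℝ) 1, ENNReal.ofReal x⁻¹ = ⊤ := by
  by_contra h
  have hfin : HasFiniteIntegral (fun x : ℝ => x⁻¹) (volume.restrict (Ioo (0:ℝ) 1)) := by
    rw [HasFiniteIntegral]
    have heq : ∫⁻ x in Ioo (0:ℝ) 1, ‖x⁻¹‖ₑ =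
        ∫⁻ x in Ioo (0:ℝ) 1, ENNReal.ofReal x⁻¹ := by
      refine setLIntegral_congr_fun measurableSet_Ioo ?_
      intro x hx
      show ‖x⁻¹‖ₑ = ENNReal.ofReal x⁻¹
      rw [Real.enorm_eq_ofReal (inv_nonneg.2 hx.1.le)]
    rw [heq]
    exact lt_top_iff_ne_top.2 h
  exact inv_not_int ⟨measurable_inv.aestronglyMeasurable.restrict, hfin⟩

end KmuAux

/-- For every `μ > 0`, the derivative `K_μ′` is not integrable on `ℝ`; equivalently,
`∫_0^1 (∫_0^∞ τ² e^{−xτ}/(μ²+τ²) dτ) dx = +∞`.  Consequently `K_μ′ ∉ L¹(ℝ)`. -/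
theorem Kmu_deriv_not_integrable (μ : ℝ) (hμ : 0 < μ) :
    ¬ Integrable (deriv (Kmu μ)) volume ∧
      ∫⁻ x in Ioo (0:ℝ) 1,
        ENNReal.ofReal (∫ τ in Ioi (0:ℝ), τ ^ 2 * Real.exp (-x * τ) / (μ ^ 2 + τ ^ 2)) = ⊤ := by
  set c := Real.sqrt (2 / Real.pi) with hc_def
  have hπ : (0:ℝ) < 2 / Real.pi := by positivity
  have hc : 0 < c := Real.sqrt_pos.2 hπ
  set d := Real.exp (-(μ + 1)) / 2 with hd_def
  have hd : 0 < d := by positivity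
  set F : ℝ → ℝ := fun x => ∫ τ in Ioi (0:ℝ), τ ^ 2 * Real.exp (-x * τ) / (μ ^ 2 + τ ^ 2)
    with hF_def
  constructor
  · intro h
    have hrestr : IntegrableOn (deriv (Kmu μ)) (Ioo 0 1) := h.integrableOn
    have heq : ∀ x ∈ Ioo (0:ℝ) 1, deriv (Kmu μ) x = -(c * F x) :=
      fun x hx => (KmuAux.hasDeriv hμ hx.1).deriv
    have h1 : IntegrableOn (fun x => -(c * F x)) (Ioo 0 1) :=
      hrestr.congr_fun heq measurableSet_Ioo
    have hF : IntegrableOn F (Ioo 0 1) := by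
      have h2 := (h1.neg.const_mul c⁻¹)
      refine IntegrableOn.congr_fun h2 (fun x _ => ?_) measurableSet_Ioo
      simp only [Pi.neg_apply, neg_neg]
      field_simp
    have h3 : IntegrableOn (fun x : ℝ => d * x⁻¹) (Ioo 0 1) := by
      refine hF.mono' ((measurable_const.mul measurable_inv).aestronglyMeasurable.restrict) ?_
      filter_upwards [ae_restrict_mem measurableSet_Ioo] with x hx
      rw [Real.norm_eq_abs, abs_of_nonneg (mul_nonneg hd.le (inv_nonneg.2 hx.1.le))]
      exact KmuAux.lower hμ hx
    have h4 : IntegrableOn (fun x : ℝ => x⁻¹) (Ioo 0 1) := by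
      have h5 := h3.const_mul d⁻¹
      refine IntegrableOn.congr_fun h5 (fun x _ => ?_) measurableSet_Ioo
      field_simp
    exact KmuAux.inv_not_int h4
  · have hmono : ∫⁻ x in Ioo (0:ℝ) 1, ENNReal.ofReal (d * x⁻¹) ≤
        ∫⁻ x in Ioo (0:ℝ) 1, ENNReal.ofReal (F x) := by
      refine lintegral_mono_ae ?_
      filter_upwards [ae_restrict_mem measurableSet_Ioo] with x hx
      exact ENNReal.ofReal_le_ofReal (KmuAux.lower hμ hx)
    have hsplit : ∫⁻ x in Ioo (0:ℝ) 1, ENNReal.ofReal (d * x⁻¹) = ⊤ := by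
      have : ∀ x : ℝ, ENNReal.ofReal (d * x⁻¹) =
          ENNReal.ofReal d * ENNReal.ofReal x⁻¹ := fun x => ENNReal.ofReal_mul hd.le
      simp_rw [this]
      rw [lintegral_const_mul _ (by fun_prop)]
      rw [KmuAux.lintegral_inv_top, ENNReal.mul_top]
      simp [hd.ne', hd]
    exact top_le_iff.1 (hsplit ▸ hmono)
end

section
/- For every μ > 0, lim_{x→0⁺} x ∫_0^∞ τ² e^{−xτ}/(μ²+τ²) dτ = 1; equivalently, lim_{x→0⁺} x·K_μ′(x) = −√(2/π). -/
open MeasureTheory Set Filter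

variable {μ x : ℝ}


lemma denom_pos (hμ : 0 < μ) (τ : ℝ) : 0 < μ ^ 2 + τ ^ 2 := by positivity

lemma integrableOn_frac (hμ : 0 < μ) (hx : 0 < x) (f : ℝ → ℝ) (hc : Continuous f)
    (C : ℝ) (hb : ∀ τ, 0 < τ → |f τ| ≤ C * (μ ^ 2 + τ ^ 2)) :
    IntegrableOn (fun τ => f τ * Real.exp (-x * τ) / (μ ^ 2 + τ ^ 2)) (Ioi 0) := by
  have hcont : Continuous fun τ => f τ * Real.exp (-x * τ) / (μ ^ 2 + τ ^ 2) := by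
    apply Continuous.div
    · fun_prop
    · fun_prop
    · intro τ; exact (denom_pos hμ τ).ne'
  refine Integrable.mono ((exp_neg_integrableOn_Ioi 0 hx).const_mul C)
    hcont.aestronglyMeasurable ?_
  filter_upwards [ae_restrict_mem measurableSet_Ioi] with τ hτ
  have hd := denom_pos hμ τ
  have he : 0 < Real.exp (-x * τ) := Real.exp_pos _
  rw [Real.norm_eq_abs, Real.norm_eq_abs, abs_div, abs_mul, abs_of_pos hd, abs_of_pos he]
  have h1 : |f τ| * Real.exp (-x * τ) / (μ ^ 2 + τ ^ 2) ≤ C * Real.exp (-x * τ) := by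
    rw [div_le_iff₀ hd]
    calc |f τ| * Real.exp (-x * τ) ≤ (C * (μ ^ 2 + τ ^ 2)) * Real.exp (-x * τ) := by
          exact mul_le_mul_of_nonneg_right (hb τ hτ) he.le
      _ = C * Real.exp (-x * τ) * (μ ^ 2 + τ ^ 2) := by ring
  exact h1.trans (le_abs_self _)

lemma key_identity (hμ : 0 < μ) (hx : 0 < x) :
    x * ∫ τ in Ioi (0:ℝ), τ ^ 2 * Real.exp (-x * τ) / (μ ^ 2 + τ ^ 2)
      = 1 - x * ∫ τ in Ioi (0:ℝ), μ ^ 2 * Real.exp (-x * τ) / (μ ^ 2 + τ ^ 2) := by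
  have h1 : IntegrableOn (fun τ => μ ^ 2 * Real.exp (-x * τ) / (μ ^ 2 + τ ^ 2)) (Ioi 0) :=
    integrableOn_frac hμ hx _ continuous_const 1 (fun τ hτ => by
      rw [abs_of_pos (by positivity)]; nlinarith)
  have h2 : IntegrableOn (fun τ => Real.exp (-x * τ)) (Ioi 0) := exp_neg_integrableOn_Ioi 0 hx
  have hpt : ∀ τ : ℝ, τ ^ 2 * Real.exp (-x * τ) / (μ ^ 2 + τ ^ 2)
      = Real.exp (-x * τ) - μ ^ 2 * Real.exp (-x * τ) / (μ ^ 2 + τ ^ 2) := by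
    intro τ
    have hd := denom_pos hμ τ
    field_simp
    ring
  have hint : (∫ τ in Ioi (0:ℝ), τ ^ 2 * Real.exp (-x * τ) / (μ ^ 2 + τ ^ 2))
      = (∫ τ in Ioi (0:ℝ), Real.exp (-x * τ))
        - ∫ τ in Ioi (0:ℝ), μ ^ 2 * Real.exp (-x * τ) / (μ ^ 2 + τ ^ 2) := by
    rw [← integral_sub h2 h1]
    exact setIntegral_congr_fun measurableSet_Ioi fun τ _ => hpt τ
  have hexp : (∫ τ in Ioi (0:ℝ), Real.exp (-x * τ)) = x⁻¹ := by
    have := integral_comp_mul_left_Ioi (fun y => Real.exp (-y)) 0 hx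
    simp only [mul_zero, smul_eq_mul, integral_exp_neg_Ioi_zero, mul_one] at this
    simpa [neg_mul] using this
  rw [hint, hexp, mul_sub, mul_inv_cancel₀ hx.ne']

lemma g_bound (hμ : 0 < μ) (hx : 0 < x) :
    (0:ℝ) ≤ (∫ τ in Ioi (0:ℝ), μ ^ 2 * Real.exp (-x * τ) / (μ ^ 2 + τ ^ 2)) ∧
    (∫ τ in Ioi (0:ℝ), μ ^ 2 * Real.exp (-x * τ) / (μ ^ 2 + τ ^ 2))
      ≤ ∫ τ in Ioi (0:ℝ), (μ ^ 2 + 1) * (1 + τ ^ 2)⁻¹ := by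
  have h1 : IntegrableOn (fun τ => μ ^ 2 * Real.exp (-x * τ) / (μ ^ 2 + τ ^ 2)) (Ioi 0) :=
    integrableOn_frac hμ hx _ continuous_const 1 (fun τ hτ => by
      rw [abs_of_pos (by positivity)]; nlinarith)
  have h2 : IntegrableOn (fun τ : ℝ => (μ ^ 2 + 1) * (1 + τ ^ 2)⁻¹) (Ioi 0) :=
    (integrable_inv_one_add_sq.const_mul _).integrableOn
  constructor
  · apply setIntegral_nonneg measurableSet_Ioi
    intro τ _
    have := denom_pos hμ τ
    positivity
  · apply setIntegral_mono_on h1 h2 measurableSet_Ioi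
    intro τ hτ
    have hd := denom_pos hμ τ
    rw [div_le_iff₀ hd]
    have he : Real.exp (-x * τ) ≤ 1 := by
      apply Real.exp_le_one_iff.mpr; simp at hτ ⊢; positivity
    have h1τ : (0:ℝ) < 1 + τ ^ 2 := by positivity
    have key : μ ^ 2 * (1 + τ ^ 2) ≤ (μ ^ 2 + 1) * (μ ^ 2 + τ ^ 2) := by nlinarith
    calc μ ^ 2 * Real.exp (-x * τ) ≤ μ ^ 2 * 1 := by
          exact mul_le_mul_of_nonneg_left he (by positivity)
      _ ≤ (μ ^ 2 + 1) * (1 + τ ^ 2)⁻¹ * (μ ^ 2 + τ ^ 2) := by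
          rw [mul_one]
          rw [← sub_nonneg] at key ⊢
          have : (μ ^ 2 + 1) * (1 + τ ^ 2)⁻¹ * (μ ^ 2 + τ ^ 2) - μ ^ 2
              = ((μ ^ 2 + 1) * (μ ^ 2 + τ ^ 2) - μ ^ 2 * (1 + τ ^ 2)) * (1 + τ ^ 2)⁻¹ := by
            field_simp
          rw [this]
          positivity

lemma part1 (hμ : 0 < μ) :
    Tendsto (fun x : ℝ => x * ∫ τ in Ioi (0:ℝ), τ ^ 2 * Real.exp (-x * τ) / (μ ^ 2 + τ ^ 2))
      (nhdsWithin 0 (Ioi 0)) (nhds 1) := by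
  set M : ℝ := ∫ τ in Ioi (0:ℝ), (μ ^ 2 + 1) * (1 + τ ^ 2)⁻¹ with hM
  set g : ℝ → ℝ := fun x => ∫ τ in Ioi (0:ℝ), μ ^ 2 * Real.exp (-x * τ) / (μ ^ 2 + τ ^ 2)
  have hxg : Tendsto (fun x : ℝ => x * g x) (nhdsWithin 0 (Ioi 0)) (nhds 0) := by
    have hub : ∀ᶠ x in nhdsWithin (0:ℝ) (Ioi 0), x * g x ≤ x * M := by
      filter_upwards [self_mem_nhdsWithin] with x hx
      exact mul_le_mul_of_nonneg_left (g_bound hμ hx).2 (le_of_lt hx)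
    have hlb : ∀ᶠ x in nhdsWithin (0:ℝ) (Ioi 0), 0 ≤ x * g x := by
      filter_upwards [self_mem_nhdsWithin] with x hx
      exact mul_nonneg hx.le (g_bound hμ hx).1
    have hM0 : Tendsto (fun x : ℝ => x * M) (nhdsWithin 0 (Ioi 0)) (nhds 0) := by
      have : Tendsto (fun x : ℝ => x * M) (nhds 0) (nhds (0 * M)) :=
        (tendsto_id.mul_const M)
      rw [zero_mul] at this
      exact this.mono_left nhdsWithin_le_nhds
    exact squeeze_zero' hlb hub hM0
  have h1 : Tendsto (fun x : ℝ => 1 - x * g x) (nhdsWithin 0 (Ioi 0)) (nhds 1) := by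
    have := tendsto_const_nhds.sub hxg (f := fun _ : ℝ => (1:ℝ))
    simpa using this
  apply h1.congr'
  filter_upwards [self_mem_nhdsWithin] with x hx
  exact (key_identity hμ hx).symm

lemma hasDerivAt_G (hμ : 0 < μ) (hx : 0 < x) :
    HasDerivAt (fun y => ∫ τ in Ioi (0:ℝ), τ * Real.exp (-y * τ) / (μ ^ 2 + τ ^ 2))
      (-∫ τ in Ioi (0:ℝ), τ ^ 2 * Real.exp (-x * τ) / (μ ^ 2 + τ ^ 2)) x := by
  set F : ℝ → ℝ → ℝ := fun y τ => τ * Real.exp (-y * τ) / (μ ^ 2 + τ ^ 2)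
  set F' : ℝ → ℝ → ℝ := fun y τ => -(τ ^ 2 * Real.exp (-y * τ) / (μ ^ 2 + τ ^ 2))
  have hcont : ∀ y : ℝ, Continuous (F y) := by
    intro y
    apply Continuous.div
    · fun_prop
    · fun_prop
    · intro τ; exact (denom_pos hμ τ).ne'
  have hcont' : ∀ y : ℝ, Continuous (F' y) := by
    intro y
    apply Continuous.neg
    apply Continuous.div
    · fun_prop
    · fun_prop
    · intro τ; exact (denom_pos hμ τ).ne'
  have hmain := hasDerivAt_integral_of_dominated_loc_of_deriv_le
    (μ := volume.restrict (Ioi (0:ℝ))) (F := F) (F' := F')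
    (x₀ := x) (s := Metric.ball x (x / 2)) (bound := fun τ => Real.exp (-(x / 2) * τ))
    (Metric.ball_mem_nhds x (half_pos hx))
    (Eventually.of_forall fun y => (hcont y).aestronglyMeasurable)
    (integrableOn_frac hμ hx _ continuous_id (2 * μ)⁻¹ (fun τ hτ => by
      rw [abs_of_pos hτ, ← sub_nonneg]
      have : (2 * μ)⁻¹ * (μ ^ 2 + τ ^ 2) - τ = (2 * μ)⁻¹ * (μ - τ) ^ 2 := by
        field_simp; ring
      rw [this]; positivity))
    ((hcont' x).aestronglyMeasurable)
    ?_ (exp_neg_integrableOn_Ioi 0 (by positivity)) ?_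
  · refine hmain.2.congr_deriv ?_
    exact integral_neg fun τ => τ ^ 2 * Real.exp (-x * τ) / (μ ^ 2 + τ ^ 2)
  · filter_upwards [ae_restrict_mem measurableSet_Ioi] with τ hτ
    intro y hy
    have hτ0 : (0:ℝ) < τ := hτ
    have hd := denom_pos hμ τ
    have hy2 : x / 2 ≤ y := by
      have := abs_lt.mp (by simpa [Real.dist_eq] using Metric.mem_ball.mp hy)
      linarith [this.1]
    have h1 : ‖F' y τ‖ = τ ^ 2 * Real.exp (-y * τ) / (μ ^ 2 + τ ^ 2) := by
      rw [Real.norm_eq_abs, abs_neg, abs_of_nonneg (by positivity)]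
    rw [h1]
    have hfrac : τ ^ 2 / (μ ^ 2 + τ ^ 2) ≤ 1 := by
      rw [div_le_one hd]; nlinarith
    calc τ ^ 2 * Real.exp (-y * τ) / (μ ^ 2 + τ ^ 2)
        = (τ ^ 2 / (μ ^ 2 + τ ^ 2)) * Real.exp (-y * τ) := by ring
      _ ≤ 1 * Real.exp (-y * τ) := by
          exact mul_le_mul_of_nonneg_right hfrac (Real.exp_pos _).le
      _ = Real.exp (-y * τ) := one_mul _
      _ ≤ Real.exp (-(x / 2) * τ) := by
          apply Real.exp_le_exp.mpr
          nlinarith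
  · filter_upwards [ae_restrict_mem measurableSet_Ioi] with τ hτ
    intro y _
    have hd := denom_pos hμ τ
    have h1 : HasDerivAt (fun y : ℝ => -y * τ) (-τ) y := by
      simpa using ((hasDerivAt_id y).neg.mul_const τ)
    have h2 : HasDerivAt (fun y : ℝ => Real.exp (-y * τ)) (Real.exp (-y * τ) * (-τ)) y :=
      h1.exp
    have h3 : HasDerivAt (fun y : ℝ => τ * Real.exp (-y * τ) / (μ ^ 2 + τ ^ 2))
        (τ * (Real.exp (-y * τ) * (-τ)) / (μ ^ 2 + τ ^ 2)) y :=
      (h2.const_mul τ).div_const _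
    refine h3.congr_deriv ?_
    show _ = -(τ ^ 2 * Real.exp (-y * τ) / (μ ^ 2 + τ ^ 2))
    ring

lemma deriv_Kmu (hμ : 0 < μ) (hx : 0 < x) :
    deriv (Kmu μ) x = Real.sqrt (2 / Real.pi) *
      (-∫ τ in Ioi (0:ℝ), τ ^ 2 * Real.exp (-x * τ) / (μ ^ 2 + τ ^ 2)) := by
  have heq : Kmu μ =ᶠ[nhds x] fun y =>
      Real.sqrt (2 / Real.pi) * ∫ τ in Ioi (0:ℝ), τ * Real.exp (-y * τ) / (μ ^ 2 + τ ^ 2) := by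
    filter_upwards [Ioi_mem_nhds hx] with y hy
    simp [Kmu, abs_of_pos (show (0:ℝ) < y from hy)]
  rw [heq.deriv_eq]
  exact (((hasDerivAt_G hμ hx).const_mul (Real.sqrt (2 / Real.pi)))).deriv

/-- For every `μ > 0`, `lim_{x→0⁺} x ∫_0^∞ τ² e^{−xτ}/(μ²+τ²) dτ = 1`;
equivalently, `lim_{x→0⁺} x·K_μ′(x) = −√(2/π)`. -/
theorem Kmu_deriv_asymptotics_at_zero (μ : ℝ) (hμ : 0 < μ) :
    Tendsto (fun x : ℝ => x * ∫ τ in Ioi (0:ℝ), τ ^ 2 * Real.exp (-x * τ) / (μ ^ 2 + τ ^ 2))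
      (nhdsWithin 0 (Ioi 0)) (nhds 1) ∧
    Tendsto (fun x : ℝ => x * deriv (Kmu μ) x)
      (nhdsWithin 0 (Ioi 0)) (nhds (-Real.sqrt (2 / Real.pi))) := by
  refine ⟨part1 hμ, ?_⟩
  have h2 : Tendsto (fun x : ℝ => -Real.sqrt (2 / Real.pi) *
      (x * ∫ τ in Ioi (0:ℝ), τ ^ 2 * Real.exp (-x * τ) / (μ ^ 2 + τ ^ 2)))
      (nhdsWithin 0 (Ioi 0)) (nhds (-Real.sqrt (2 / Real.pi))) := by
    have := (part1 hμ).const_mul (-Real.sqrt (2 / Real.pi))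
    simpa using this
  apply h2.congr'
  filter_upwards [self_mem_nhdsWithin] with x hx
  rw [deriv_Kmu hμ hx]
  ring
end

section
/- For every μ > 0, lim_{x→0⁺} K_μ(x)/log(1/x) = √(2/π); in particular K_μ(x) → +∞ as x → 0⁺. -/
open MeasureTheory Set Filter

noncomputable def KmuI (μ x : ℝ) : ℝ :=
  ∫ τ in Ioi (0:ℝ), τ * Real.exp (-x * τ) / (μ ^ 2 + τ ^ 2)

lemma f_cont (μ x : ℝ) (hμ : 0 < μ) :
    Continuous fun τ : ℝ => τ * Real.exp (-x * τ) / (μ ^ 2 + τ ^ 2) := by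
  apply Continuous.div (by continuity) (by continuity)
  intro τ; positivity

lemma f_nonneg (μ x : ℝ) {τ : ℝ} : 0 ≤ τ * Real.exp (-x * τ) / (μ ^ 2 + τ ^ 2) → True := by simp

lemma f_le (μ : ℝ) (hμ : 0 < μ) (x : ℝ) {τ : ℝ} (hτ : 0 ≤ τ) :
    τ * Real.exp (-x * τ) / (μ ^ 2 + τ ^ 2) ≤ (1 / (2 * μ)) * Real.exp (-x * τ) := by
  have hden : (0:ℝ) < μ ^ 2 + τ ^ 2 := by positivity
  have he : (0:ℝ) < Real.exp (-x * τ) := Real.exp_pos _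
  rw [div_le_iff₀ hden, div_mul_eq_mul_div, div_mul_eq_mul_div, le_div_iff₀ (by positivity : (0:ℝ) < 2 * μ)]
  nlinarith [sq_nonneg (μ - τ)]

lemma f_integrableOn (μ : ℝ) (hμ : 0 < μ) {x : ℝ} (hx : 0 < x) :
    IntegrableOn (fun τ : ℝ => τ * Real.exp (-x * τ) / (μ ^ 2 + τ ^ 2)) (Ioi 0) := by
  apply Integrable.mono' ((exp_neg_integrableOn_Ioi 0 hx).const_mul (1 / (2 * μ)))
  · exact (f_cont μ x hμ).aestronglyMeasurable.restrict
  · filter_upwards [ae_restrict_mem measurableSet_Ioi] with τ hτ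
    have hτ' : (0:ℝ) < τ := hτ
    have h0 : (0:ℝ) ≤ τ * Real.exp (-x * τ) / (μ ^ 2 + τ ^ 2) := by positivity
    rw [Real.norm_of_nonneg h0]
    exact f_le μ hμ x (le_of_lt hτ)

lemma I_bounds (μ : ℝ) (hμ : 0 < μ) {x : ℝ} (hx0 : 0 < x) (hx1 : x < 1) :
    Real.log (1 / x) - (1 + μ ^ 2 / 2) ≤ KmuI μ x ∧
      KmuI μ x ≤ Real.log (1 / x) + (1 / (2 * μ) + 1) := by
  set f : ℝ → ℝ := fun τ => τ * Real.exp (-x * τ) / (μ ^ 2 + τ ^ 2) with hf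
  have hfi : IntegrableOn f (Ioi 0) := f_integrableOn μ hμ hx0
  have h1x : (1:ℝ) < 1 / x := (one_lt_div hx0).2 hx1
  have hxe : x ≠ 0 := ne_of_gt hx0
  -- splits
  have hs1 : Ioc (0:ℝ) 1 ∪ Ioi 1 = Ioi 0 := Ioc_union_Ioi_eq_Ioi zero_le_one
  have hs2 : Ioc (1:ℝ) (1/x) ∪ Ioi (1/x) = Ioi 1 := Ioc_union_Ioi_eq_Ioi h1x.le
  have hI : KmuI μ x = (∫ τ in Ioc (0:ℝ) 1, f τ) + ((∫ τ in Ioc (1:ℝ) (1/x), f τ)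
      + ∫ τ in Ioi (1/x), f τ) := by
    rw [KmuI, ← hf]
    rw [← setIntegral_union (Ioc_disjoint_Ioi le_rfl) measurableSet_Ioi
      (hfi.mono_set (fun τ hτ => lt_trans one_pos hτ.1))
      (hfi.mono_set (fun τ hτ => lt_trans (lt_trans one_pos h1x) hτ)), hs2,
      ← setIntegral_union (Ioc_disjoint_Ioi le_rfl) measurableSet_Ioi
      (hfi.mono_set (by rw [← hs1]; exact subset_union_left))
      (hfi.mono_set (by rw [← hs1]; exact subset_union_right)), hs1]
  -- piece A : over Ioc 0 1
  have hA0 : 0 ≤ ∫ τ in Ioc (0:ℝ) 1, f τ := by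
    apply setIntegral_nonneg measurableSet_Ioc
    intro τ hτ
    have h1 : (0:ℝ) < τ := hτ.1
    positivity
  have hA1 : (∫ τ in Ioc (0:ℝ) 1, f τ) ≤ 1 / (2 * μ) := by
    have h1 : (∫ τ in Ioc (0:ℝ) 1, f τ) ≤ ∫ _τ in Ioc (0:ℝ) 1, (1 / (2 * μ) : ℝ) := by
      apply setIntegral_mono_on
        (hfi.mono_set (fun τ hτ => hτ.1)) (integrableOn_const measure_Ioc_lt_top.ne)
        measurableSet_Ioc
      intro τ hτ
      calc f τ ≤ 1 / (2 * μ) * Real.exp (-x * τ) := f_le μ hμ x hτ.1.le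
        _ ≤ 1 / (2 * μ) * 1 := by
            apply mul_le_mul_of_nonneg_left _ (by positivity)
            exact Real.exp_le_one_iff.2 (by nlinarith [hτ.1])
        _ = 1 / (2 * μ) := mul_one _
    simpa [Real.volume_Ioc] using h1
  -- piece C : over Ioi (1/x)
  have hC0 : 0 ≤ ∫ τ in Ioi (1/x), f τ := by
    apply setIntegral_nonneg measurableSet_Ioi
    intro τ hτ
    have h1 : (0:ℝ) < τ := lt_trans (lt_trans one_pos h1x) hτ
    positivity
  have hexpint : (∫ τ in Ioi (1/x), x * Real.exp (-x * τ)) = Real.exp (-1) := by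
    have hderiv : ∀ τ ∈ Ici (1/x), HasDerivAt (fun t => -Real.exp (-x * t))
        (x * Real.exp (-x * τ)) τ := by
      intro τ _
      have h := (((hasDerivAt_id τ).const_mul (-x)).exp).neg
      exact h.congr_deriv (by simp only [id, mul_one]; ring)
    have hint : IntegrableOn (fun τ => x * Real.exp (-x * τ)) (Ioi (1/x)) :=
      (exp_neg_integrableOn_Ioi _ hx0).const_mul x
    have htend : Tendsto (fun t => -Real.exp (-x * t)) atTop (nhds 0) := by
      rw [show (0:ℝ) = -0 by ring]
      apply Tendsto.neg
      have h2 : Tendsto (fun t : ℝ => x * t) atTop atTop :=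
        Tendsto.const_mul_atTop hx0 tendsto_id
      have h3 := Real.tendsto_exp_neg_atTop_nhds_zero.comp h2
      exact h3.congr (fun t => by simp [Function.comp, neg_mul])
    rw [integral_Ioi_of_hasDerivAt_of_tendsto' hderiv hint htend]
    have hxx : -x * (1/x) = -1 := by field_simp
    rw [hxx]
    ring
  have hC1 : (∫ τ in Ioi (1/x), f τ) ≤ Real.exp (-1) := by
    rw [← hexpint]
    apply setIntegral_mono_on
      (hfi.mono_set (fun τ hτ => lt_trans (lt_trans one_pos h1x) hτ))
      ((exp_neg_integrableOn_Ioi _ hx0).const_mul x) measurableSet_Ioi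
    intro τ hτ
    have hτ0 : (0:ℝ) < τ := lt_trans (lt_trans one_pos h1x) hτ
    have hxτ : 1 ≤ x * τ := by
      have h := (div_le_iff₀ hx0).1 (le_of_lt hτ)
      linarith
    have he : (0:ℝ) < Real.exp (-x * τ) := Real.exp_pos _
    have hden : (0:ℝ) < μ ^ 2 + τ ^ 2 := by positivity
    show τ * Real.exp (-x * τ) / (μ ^ 2 + τ ^ 2) ≤ x * Real.exp (-x * τ)
    rw [div_le_iff₀ hden]
    nlinarith [mul_nonneg (sq_nonneg μ) (mul_nonneg hx0.le he.le),
      mul_le_mul_of_nonneg_right hxτ (mul_nonneg hτ0.le he.le)]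
  -- piece B : over Ioc 1 (1/x)
  have hBioc : (∫ τ in Ioc (1:ℝ) (1/x), f τ) = ∫ τ in (1:ℝ)..(1/x), f τ :=
    (intervalIntegral.integral_of_le h1x.le).symm
  have hfB : IntervalIntegrable f volume 1 (1/x) :=
    (intervalIntegrable_iff_integrableOn_Ioc_of_le h1x.le).2
      (hfi.mono_set (fun τ hτ => lt_trans one_pos hτ.1))
  have huIcc : Set.uIcc (1:ℝ) (1/x) = Icc 1 (1/x) := uIcc_of_le h1x.le
  have hne : ∀ τ ∈ Set.uIcc (1:ℝ) (1/x), τ ≠ 0 := by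
    intro τ hτ
    rw [huIcc] at hτ
    exact ne_of_gt (lt_of_lt_of_le one_pos hτ.1)
  have hzero : (0:ℝ) ∉ Set.uIcc (1:ℝ) (1/x) := fun h => (hne 0 h) rfl
  have hBupper : (∫ τ in (1:ℝ)..(1/x), f τ) ≤ Real.log (1/x) := by
    have hint1 : IntervalIntegrable (fun τ : ℝ => 1/τ) volume 1 (1/x) := by
      apply ContinuousOn.intervalIntegrable
      exact continuousOn_const.div continuousOn_id hne
    have h1 : (∫ τ in (1:ℝ)..(1/x), f τ) ≤ ∫ τ in (1:ℝ)..(1/x), 1/τ := by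
      apply intervalIntegral.integral_mono_on h1x.le hfB hint1
      intro τ hτ
      have hτ0 : (0:ℝ) < τ := lt_of_lt_of_le one_pos hτ.1
      have he : (0:ℝ) < Real.exp (-x * τ) := Real.exp_pos _
      have he1 : Real.exp (-x * τ) ≤ 1 :=
        Real.exp_le_one_iff.2 (by nlinarith)
      have hden : (0:ℝ) < μ ^ 2 + τ ^ 2 := by positivity
      show τ * Real.exp (-x * τ) / (μ ^ 2 + τ ^ 2) ≤ 1 / τ
      rw [div_le_div_iff₀ hden hτ0]
      nlinarith [mul_le_mul_of_nonneg_left he1 (sq_nonneg τ), sq_nonneg μ]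
    rw [integral_one_div hzero, div_one] at h1
    exact h1
  have hBlower : Real.log (1/x) - (1 + μ ^ 2 / 2) ≤ ∫ τ in (1:ℝ)..(1/x), f τ := by
    set g : ℝ → ℝ := fun τ => 1/τ - (μ ^ 2 * τ ^ (-3 : ℤ) + x) with hg
    have hgint1 : IntervalIntegrable (fun τ : ℝ => μ ^ 2 * τ ^ (-3 : ℤ) + x)
        volume 1 (1/x) := by
      apply ContinuousOn.intervalIntegrable
      apply ContinuousOn.add _ continuousOn_const
      apply ContinuousOn.mul continuousOn_const
      intro τ hτ
      exact (continuousAt_zpow₀ τ (-3) (Or.inl (hne τ hτ))).continuousWithinAt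
    have hint1 : IntervalIntegrable (fun τ : ℝ => 1/τ) volume 1 (1/x) := by
      apply ContinuousOn.intervalIntegrable
      exact continuousOn_const.div continuousOn_id hne
    have h1 : (∫ τ in (1:ℝ)..(1/x), g τ) ≤ ∫ τ in (1:ℝ)..(1/x), f τ := by
      apply intervalIntegral.integral_mono_on h1x.le (hint1.sub hgint1) hfB
      intro τ hτ
      have hτ0 : (0:ℝ) < τ := lt_of_lt_of_le one_pos hτ.1
      have hτ3 : (0:ℝ) < τ ^ 3 := by positivity
      have hden : (0:ℝ) < μ ^ 2 + τ ^ 2 := by positivity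
      have hxτ : x * τ ≤ 1 := by
        have := hτ.2
        rw [le_div_iff₀ hx0] at this
        linarith [this]
      have he1 : 1 - x * τ ≤ Real.exp (-x * τ) := by
        have := Real.add_one_le_exp (-x * τ)
        linarith
      have hzp : (τ : ℝ) ^ (-3 : ℤ) = 1 / τ ^ 3 := by
        rw [zpow_neg, ← inv_eq_one_div]
        norm_num
      show 1/τ - (μ ^ 2 * τ ^ (-3 : ℤ) + x) ≤ τ * Real.exp (-x * τ) / (μ ^ 2 + τ ^ 2)
      rw [hzp]
      have key : 1/τ - (μ ^ 2 * (1 / τ ^ 3) + x) ≤ (1 - x * τ) * (τ / (μ ^ 2 + τ ^ 2)) := by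
        have e1 : 1/τ - (μ ^ 2 * (1 / τ ^ 3) + x) = (τ ^ 2 - μ ^ 2 - x * τ ^ 3) / τ ^ 3 := by
          field_simp
          ring
        have e2 : (1 - x * τ) * (τ / (μ ^ 2 + τ ^ 2)) = ((1 - x * τ) * τ) / (μ ^ 2 + τ ^ 2) := by
          ring
        rw [e1, e2, div_le_div_iff₀ hτ3 hden]
        nlinarith [sq_nonneg (μ ^ 2), mul_nonneg (mul_nonneg hx0.le hτ3.le) (sq_nonneg μ)]
      calc 1/τ - (μ ^ 2 * (1 / τ ^ 3) + x)
          ≤ (1 - x * τ) * (τ / (μ ^ 2 + τ ^ 2)) := key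
        _ ≤ Real.exp (-x * τ) * (τ / (μ ^ 2 + τ ^ 2)) :=
            mul_le_mul_of_nonneg_right he1 (by positivity)
        _ = τ * Real.exp (-x * τ) / (μ ^ 2 + τ ^ 2) := by ring
    have hzint : IntervalIntegrable (fun τ : ℝ => μ ^ 2 * τ ^ (-3 : ℤ)) volume 1 (1/x) := by
      apply ContinuousOn.intervalIntegrable
      apply ContinuousOn.mul continuousOn_const
      intro τ hτ
      exact (continuousAt_zpow₀ τ (-3) (Or.inl (hne τ hτ))).continuousWithinAt
    have hv : ((1/x : ℝ)) ^ (-2 : ℤ) = x ^ 2 := by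
      rw [zpow_neg, one_div, inv_zpow, inv_inv]
      norm_num
    have h2 : (∫ τ in (1:ℝ)..(1/x), g τ) =
        Real.log (1/x) - (μ ^ 2 * ((x ^ 2 - 1) / (-2)) + (1/x - 1) * x) := by
      rw [hg, intervalIntegral.integral_sub hint1 (hzint.add intervalIntegrable_const),
        integral_one_div hzero,
        intervalIntegral.integral_add hzint intervalIntegrable_const,
        intervalIntegral.integral_const_mul,
        integral_zpow (Or.inr ⟨by norm_num, hzero⟩),
        intervalIntegral.integral_const]
      rw [div_one]
      norm_num [hv]
    have hval : Real.log (1/x) - (1 + μ ^ 2 / 2) ≤ ∫ τ in (1:ℝ)..(1/x), g τ := by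
      rw [h2]
      have hxx : (1/x - 1) * x = 1 - x := by field_simp
      rw [hxx]
      nlinarith [mul_nonneg (sq_nonneg μ) (sq_nonneg x), hx0.le]
    linarith
  constructor
  · rw [hI]
    linarith [hBlower, hBioc, hA0, hC0]
  · rw [hI]
    have hexp1 : Real.exp (-1) ≤ 1 := Real.exp_le_one_iff.2 (by norm_num)
    linarith [hBupper, hBioc, hA1, hC1]

/-- For every `μ > 0`, `lim_{x→0⁺} K_μ(x)/log(1/x) = √(2/π)`;
in particular `K_μ(x) → +∞` as `x → 0⁺`. -/
theorem Kmu_log_asymptotics_at_zero (μ : ℝ) (hμ : 0 < μ) :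
    Tendsto (fun x : ℝ => Kmu μ x / Real.log (1 / x))
      (nhdsWithin 0 (Ioi 0)) (nhds (Real.sqrt (2 / Real.pi))) ∧
    Tendsto (Kmu μ) (nhdsWithin 0 (Ioi 0)) atTop := by
  have hπ : 0 < Real.pi := Real.pi_pos
  set c := Real.sqrt (2 / Real.pi) with hc
  have hcpos : 0 < c := Real.sqrt_pos.2 (by positivity)
  have hK : ∀ x ∈ Ioo (0:ℝ) 1, Kmu μ x = c * KmuI μ x := by
    intro x hx
    rw [Kmu, KmuI, abs_of_pos hx.1]
  have hmem : ∀ᶠ x in nhdsWithin (0:ℝ) (Ioi 0), x ∈ Ioo (0:ℝ) 1 :=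
    Ioo_mem_nhdsGT_of_mem ⟨le_rfl, one_pos⟩
  have hL : Tendsto (fun x : ℝ => Real.log (1/x)) (nhdsWithin (0:ℝ) (Ioi 0)) atTop := by
    have h2 := tendsto_neg_atBot_atTop.comp Real.tendsto_log_nhdsGT_zero
    exact h2.congr (fun x => by rw [Function.comp_apply]; rw [one_div, Real.log_inv])
  have hLinv : Tendsto (fun x : ℝ => (Real.log (1/x))⁻¹) (nhdsWithin (0:ℝ) (Ioi 0)) (nhds 0) :=
    hL.inv_tendsto_atTop
  set C₁ : ℝ := 1 + μ ^ 2 / 2 with hC₁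
  set C₂ : ℝ := 1 / (2 * μ) + 1 with hC₂
  constructor
  · apply tendsto_of_tendsto_of_tendsto_of_le_of_le'
      (g := fun x : ℝ => c - c * C₁ * (Real.log (1/x))⁻¹)
      (h := fun x : ℝ => c + c * C₂ * (Real.log (1/x))⁻¹)
    · have h2 := (tendsto_const_nhds (x := c)
        (f := nhdsWithin (0:ℝ) (Ioi 0))).sub (hLinv.const_mul (c * C₁))
      simpa using h2
    · have h2 := (tendsto_const_nhds (x := c)
        (f := nhdsWithin (0:ℝ) (Ioi 0))).add (hLinv.const_mul (c * C₂))
      simpa using h2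
    · filter_upwards [hmem] with x hx
      have hLpos : 0 < Real.log (1/x) := Real.log_pos ((one_lt_div hx.1).2 hx.2)
      have hIlow := (I_bounds μ hμ hx.1 hx.2).1
      rw [hK x hx, le_div_iff₀ hLpos]
      have expand : (c - c * C₁ * (Real.log (1/x))⁻¹) * Real.log (1/x)
          = c * Real.log (1/x) - c * C₁ := by
        field_simp
      rw [expand]
      nlinarith [mul_le_mul_of_nonneg_left hIlow hcpos.le]
    · filter_upwards [hmem] with x hx
      have hLpos : 0 < Real.log (1/x) := Real.log_pos ((one_lt_div hx.1).2 hx.2)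
      have hIup := (I_bounds μ hμ hx.1 hx.2).2
      rw [hK x hx, div_le_iff₀ hLpos]
      have expand : (c + c * C₂ * (Real.log (1/x))⁻¹) * Real.log (1/x)
          = c * Real.log (1/x) + c * C₂ := by
        field_simp
      rw [expand]
      nlinarith [mul_le_mul_of_nonneg_left hIup hcpos.le]
  · apply tendsto_atTop_mono' _ _
      (Tendsto.const_mul_atTop hcpos (tendsto_atTop_add_const_right _ (-C₁) hL))
    filter_upwards [hmem] with x hx
    have hIlow := (I_bounds μ hμ hx.1 hx.2).1
    rw [hK x hx]
    have h := mul_le_mul_of_nonneg_left hIlow hcpos.le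
    calc c * (Real.log (1/x) + -C₁) = c * (Real.log (1/x) - C₁) := by ring
      _ ≤ c * KmuI μ x := by nlinarith
end
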